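/- arXiv:1809.09990 — 2 statements merged into one kernel-verified Lean document; each statement's English description precedes it below -/
import Mathlib

section
/- Let S be a set of horizontal segments whose projections onto the x-axis form a proper set of intervals, and T a set of vertical segments. In the POSS problem (select minimum subset of S intersecting all of T), the ILP optimum is at most 8 times the LP-relaxation optimum. -/
attribute [local instance] Classical.propDecidable

/-- A horizontal segment at height `y` with `x`-range `[lo, hi]`. -/
structure HSeg where
  y : ℝ
  lo : ℝ
  hi : ℝ

/-- A vertical segment with `x`-coordinate `x` and `y`-range `[lo, hi]`. -/
structure VSeg where
  x : ℝ
  lo : ℝ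
  hi : ℝ

/-- A horizontal segment intersects a vertical segment. -/
def hitsHV (s : HSeg) (v : VSeg) : Prop :=
  s.lo ≤ v.x ∧ v.x ≤ s.hi ∧ v.lo ≤ s.y ∧ s.y ≤ v.hi

lemma median_exists {α : Type*} (Q : Finset α) (w y : α → ℝ)
    (hQ : Q.Nonempty) (hw : ∀ a ∈ Q, 0 ≤ w a) :
    ∃ m ∈ Q, (∑ a ∈ Q.filter (fun a => y a < y m), w a) ≤ (∑ a ∈ Q, w a)/2 ∧
      (∑ a ∈ Q.filter (fun a => y m < y a), w a) ≤ (∑ a ∈ Q, w a)/2 := by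
  set M := ∑ a ∈ Q, w a with hMdef
  have hM0 : 0 ≤ M := Finset.sum_nonneg hw
  set C := Q.filter (fun q => (∑ a ∈ Q.filter (fun a => y a < y q), w a) ≤ M/2) with hCdef
  have hC : C.Nonempty := by
    obtain ⟨q0, hq0, hmin⟩ := Q.exists_min_image y hQ
    refine ⟨q0, Finset.mem_filter.2 ⟨hq0, ?_⟩⟩
    have he : Q.filter (fun a => y a < y q0) = ∅ := by
      apply Finset.filter_eq_empty_iff.2
      intro a ha
      exact not_lt.2 (hmin a ha)
    rw [he]
    simp
    linarith
  obtain ⟨m, hmC, hmax⟩ := C.exists_max_image y hC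
  obtain ⟨hmQ, hbelow⟩ := Finset.mem_filter.1 hmC
  refine ⟨m, hmQ, hbelow, ?_⟩
  by_contra hgt
  push_neg at hgt
  set G := Q.filter (fun a => y m < y a) with hGdef
  have hGne : G.Nonempty := by
    rcases G.eq_empty_or_nonempty with h | h
    · rw [h] at hgt; simp at hgt; linarith
    · exact h
  obtain ⟨m', hm'G, hmin'⟩ := G.exists_min_image y hGne
  obtain ⟨hm'Q, hm'gt⟩ := Finset.mem_filter.1 hm'G
  have hsub : Q.filter (fun a => y a < y m') ⊆ Q.filter (fun a => ¬ (y m < y a)) := by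
    intro a ha
    obtain ⟨haQ, halt⟩ := Finset.mem_filter.1 ha
    refine Finset.mem_filter.2 ⟨haQ, ?_⟩
    intro hgt'
    exact absurd (hmin' a (Finset.mem_filter.2 ⟨haQ, hgt'⟩)) (not_le.2 halt)
  have hle : (∑ a ∈ Q.filter (fun a => y a < y m'), w a)
      ≤ ∑ a ∈ Q.filter (fun a => ¬ (y m < y a)), w a :=
    Finset.sum_le_sum_of_subset_of_nonneg hsub (fun a ha _ => hw a (Finset.mem_filter.1 ha).1)
  have hpart : (∑ a ∈ G, w a) + ∑ a ∈ Q.filter (fun a => ¬ (y m < y a)), w a = M :=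
    Finset.sum_filter_add_sum_filter_not Q _ w
  have hm'C : m' ∈ C := Finset.mem_filter.2 ⟨hm'Q, by linarith⟩
  exact absurd (hmax m' hm'C) (not_le.2 hm'gt)

lemma ssr_aux {α β : Type} (h y : α → ℝ) (xq lov hiv : β → ℝ) :
    ∀ n : ℕ, ∀ U : Finset β, U.card ≤ n → ∀ A : Finset α, ∀ w : α → ℝ,
    (∀ a ∈ A, 0 ≤ w a) →
    (∀ v ∈ U, 1 ≤ ∑ a ∈ A.filter (fun a => xq v ≤ h a ∧ lov v ≤ y a ∧ y a ≤ hiv v), w a) →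
    ∃ B ⊆ A, (∀ v ∈ U, ∃ a ∈ B, xq v ≤ h a ∧ lov v ≤ y a ∧ y a ≤ hiv v) ∧
      ((U = ∅ ∧ B = ∅) ∨ (B.card : ℝ) ≤ 2 * ∑ a ∈ A, w a - 1) := by
  intro n
  induction n with
  | zero =>
    intro U hU A w hw hfeas
    have : U = ∅ := Finset.card_eq_zero.1 (Nat.le_zero.1 hU)
    subst this
    exact ⟨∅, Finset.empty_subset _, by simp, Or.inl ⟨rfl, rfl⟩⟩
  | succ n ih =>
    intro U hU A w hw hfeas
    rcases U.eq_empty_or_nonempty with hUe | hUne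
    · subst hUe
      exact ⟨∅, Finset.empty_subset _, by simp, Or.inl ⟨rfl, rfl⟩⟩
    obtain ⟨v0, hv0U, hv0max⟩ := U.exists_max_image xq hUne
    have hM : 1 ≤ ∑ a ∈ A.filter (fun a => xq v0 ≤ h a ∧ lov v0 ≤ y a ∧ y a ≤ hiv v0), w a :=
      hfeas v0 hv0U
    set Q := A.filter (fun a => xq v0 ≤ h a ∧ lov v0 ≤ y a ∧ y a ≤ hiv v0) with hQdef
    have hQA : Q ⊆ A := Finset.filter_subset _ _
    have hwQ : ∀ a ∈ Q, 0 ≤ w a := fun a ha => hw a (hQA ha)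
    have hQne : Q.Nonempty := by
      rcases Q.eq_empty_or_nonempty with he | hne
      · rw [he] at hM; simp at hM; linarith
      · exact hne
    obtain ⟨m, hmQ, hmed1, hmed2⟩ := median_exists Q w y hQne hwQ
    obtain ⟨hmA, hmc1, hmc2, hmc3⟩ : m ∈ A ∧ xq v0 ≤ h m ∧ lov v0 ≤ y m ∧ y m ≤ hiv v0 := by
      have := Finset.mem_filter.1 hmQ
      exact ⟨this.1, this.2.1, this.2.2.1, this.2.2.2⟩
    set U1 := U.filter (fun v => hiv v < y m) with hU1def
    set U2 := U.filter (fun v => y m < lov v) with hU2def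
    set A1 := A.filter (fun a => y a < y m) with hA1def
    set A2 := A.filter (fun a => y m < y a) with hA2def
    have hv0n1 : v0 ∉ U1 := by
      intro hc
      exact absurd (Finset.mem_filter.1 hc).2 (not_lt.2 hmc3)
    have hv0n2 : v0 ∉ U2 := by
      intro hc
      exact absurd (Finset.mem_filter.1 hc).2 (not_lt.2 hmc2)
    have hcard1 : U1.card ≤ n := by
      have h1 : U1 ⊆ U.erase v0 :=
        fun v hv => Finset.mem_erase.2 ⟨fun he => hv0n1 (he ▸ hv), Finset.filter_subset _ _ hv⟩
      have := Finset.card_le_card h1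
      have := Finset.card_erase_of_mem hv0U
      omega
    have hcard2 : U2.card ≤ n := by
      have h1 : U2 ⊆ U.erase v0 :=
        fun v hv => Finset.mem_erase.2 ⟨fun he => hv0n2 (he ▸ hv), Finset.filter_subset _ _ hv⟩
      have := Finset.card_le_card h1
      have := Finset.card_erase_of_mem hv0U
      omega
    have hfeas1 : ∀ v ∈ U1, 1 ≤ ∑ a ∈ A1.filter (fun a => xq v ≤ h a ∧ lov v ≤ y a ∧ y a ≤ hiv v), w a := by
      intro v hv
      obtain ⟨hvU, hvlt⟩ := Finset.mem_filter.1 hv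
      have heq : A1.filter (fun a => xq v ≤ h a ∧ lov v ≤ y a ∧ y a ≤ hiv v)
          = A.filter (fun a => xq v ≤ h a ∧ lov v ≤ y a ∧ y a ≤ hiv v) := by
        rw [hA1def, Finset.filter_filter]
        apply Finset.filter_congr
        intro a _
        constructor
        · rintro ⟨_, hc⟩; exact hc
        · rintro ⟨h1, h2, h3⟩; exact ⟨lt_of_le_of_lt h3 hvlt, h1, h2, h3⟩
      rw [heq]
      exact hfeas v hvU
    have hfeas2 : ∀ v ∈ U2, 1 ≤ ∑ a ∈ A2.filter (fun a => xq v ≤ h a ∧ lov v ≤ y a ∧ y a ≤ hiv v), w a := by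
      intro v hv
      obtain ⟨hvU, hvlt⟩ := Finset.mem_filter.1 hv
      have heq : A2.filter (fun a => xq v ≤ h a ∧ lov v ≤ y a ∧ y a ≤ hiv v)
          = A.filter (fun a => xq v ≤ h a ∧ lov v ≤ y a ∧ y a ≤ hiv v) := by
        rw [hA2def, Finset.filter_filter]
        apply Finset.filter_congr
        intro a _
        constructor
        · rintro ⟨_, hc⟩; exact hc
        · rintro ⟨h1, h2, h3⟩; exact ⟨lt_of_lt_of_le hvlt h2, h1, h2, h3⟩
      rw [heq]
      exact hfeas v hvU
    obtain ⟨B1, hB1A, hB1cov, hB1c⟩ := ih U1 hcard1 A1 w (fun a ha => hw a (Finset.filter_subset _ _ ha)) hfeas1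
    obtain ⟨B2, hB2A, hB2cov, hB2c⟩ := ih U2 hcard2 A2 w (fun a ha => hw a (Finset.filter_subset _ _ ha)) hfeas2
    refine ⟨insert m (B1 ∪ B2), ?_, ?_, Or.inr ?_⟩
    · intro a ha
      rcases Finset.mem_insert.1 ha with rfl | ha'
      · exact hmA
      rcases Finset.mem_union.1 ha' with h1 | h2
      · exact Finset.filter_subset _ _ (hB1A h1)
      · exact Finset.filter_subset _ _ (hB2A h2)
    · intro v hv
      by_cases h1 : v ∈ U1
      · obtain ⟨a, haB, hac⟩ := hB1cov v h1
        exact ⟨a, Finset.mem_insert_of_mem (Finset.mem_union_left _ haB), hac⟩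
      by_cases h2 : v ∈ U2
      · obtain ⟨a, haB, hac⟩ := hB2cov v h2
        exact ⟨a, Finset.mem_insert_of_mem (Finset.mem_union_right _ haB), hac⟩
      · refine ⟨m, Finset.mem_insert_self _ _, le_trans (hv0max v hv) hmc1, ?_, ?_⟩
        · by_contra hc
          exact h2 (Finset.mem_filter.2 ⟨hv, not_le.1 hc⟩)
        · by_contra hc
          exact h1 (Finset.mem_filter.2 ⟨hv, not_le.1 hc⟩)
    · -- cardinality bound
      have hcard : ((insert m (B1 ∪ B2)).card : ℝ) ≤ 1 + B1.card + B2.card := by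
        have h1 := Finset.card_insert_le m (B1 ∪ B2)
        have h2 := Finset.card_union_le B1 B2
        have : ((insert m (B1 ∪ B2)).card : ℕ) ≤ 1 + B1.card + B2.card := by omega
        exact_mod_cast this
      -- sums
      have hS12 : (∑ a ∈ A1, w a) + (∑ a ∈ A2, w a) ≤ ∑ a ∈ A, w a := by
        have hdisj : Disjoint A1 A2 := by
          apply Finset.disjoint_filter_filter'
          intro p hp1 hp2
          exact fun a ha => absurd (hp2 a ha) (not_lt.2 (le_of_lt (hp1 a ha)))
        rw [← Finset.sum_union hdisj]
        apply Finset.sum_le_sum_of_subset_of_nonneg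
        · exact Finset.union_subset (Finset.filter_subset _ _) (Finset.filter_subset _ _)
        · exact fun a ha _ => hw a ha
      have hhalfA1 : (∑ a ∈ A1, w a) ≤ (∑ a ∈ A, w a) - 1/2 := by
        have hpart : (∑ a ∈ A.filter (fun a => y a < y m), w a)
            + ∑ a ∈ A.filter (fun a => ¬ (y a < y m)), w a = ∑ a ∈ A, w a :=
          Finset.sum_filter_add_sum_filter_not A _ w
        have hQpart : (∑ a ∈ Q.filter (fun a => y a < y m), w a)
            + ∑ a ∈ Q.filter (fun a => ¬ (y a < y m)), w a = ∑ a ∈ Q, w a :=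
          Finset.sum_filter_add_sum_filter_not Q _ w
        have hsub : Q.filter (fun a => ¬ (y a < y m)) ⊆ A.filter (fun a => ¬ (y a < y m)) :=
          Finset.filter_subset_filter _ hQA
        have hle : (∑ a ∈ Q.filter (fun a => ¬ (y a < y m)), w a)
            ≤ ∑ a ∈ A.filter (fun a => ¬ (y a < y m)), w a :=
          Finset.sum_le_sum_of_subset_of_nonneg hsub (fun a ha _ => hw a (Finset.mem_filter.1 ha).1)
        rw [hA1def]
        linarith
      have hhalfA2 : (∑ a ∈ A2, w a) ≤ (∑ a ∈ A, w a) - 1/2 := by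
        have hpart : (∑ a ∈ A.filter (fun a => y m < y a), w a)
            + ∑ a ∈ A.filter (fun a => ¬ (y m < y a)), w a = ∑ a ∈ A, w a :=
          Finset.sum_filter_add_sum_filter_not A _ w
        have hQpart : (∑ a ∈ Q.filter (fun a => y m < y a), w a)
            + ∑ a ∈ Q.filter (fun a => ¬ (y m < y a)), w a = ∑ a ∈ Q, w a :=
          Finset.sum_filter_add_sum_filter_not Q _ w
        have hsub : Q.filter (fun a => ¬ (y m < y a)) ⊆ A.filter (fun a => ¬ (y m < y a)) :=
          Finset.filter_subset_filter _ hQA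
        have hle : (∑ a ∈ Q.filter (fun a => ¬ (y m < y a)), w a)
            ≤ ∑ a ∈ A.filter (fun a => ¬ (y m < y a)), w a :=
          Finset.sum_le_sum_of_subset_of_nonneg hsub (fun a ha _ => hw a (Finset.mem_filter.1 ha).1)
        rw [hA2def]
        linarith
      have hQtot : (1:ℝ) ≤ ∑ a ∈ A, w a := by
        have : (∑ a ∈ Q, w a) ≤ ∑ a ∈ A, w a :=
          Finset.sum_le_sum_of_subset_of_nonneg hQA (fun a ha _ => hw a ha)
        linarith
      rcases hB1c with ⟨hU1e, hB1e⟩ | hB1le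
      · rcases hB2c with ⟨hU2e, hB2e⟩ | hB2le
        · have e1 : (B1.card : ℝ) = 0 := by rw [hB1e]; simp
          have e2 : (B2.card : ℝ) = 0 := by rw [hB2e]; simp
          linarith
        · have e1 : (B1.card : ℝ) = 0 := by rw [hB1e]; simp
          linarith
      · rcases hB2c with ⟨hU2e, hB2e⟩ | hB2le
        · have e2 : (B2.card : ℝ) = 0 := by rw [hB2e]; simp
          linarith
        · linarith

lemma ssr {α β : Type} (h y : α → ℝ) (xq lov hiv : β → ℝ) (U : Finset β) (A : Finset α)
    (w : α → ℝ) (hw : ∀ a ∈ A, 0 ≤ w a)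
    (hfeas : ∀ v ∈ U, 1 ≤ ∑ a ∈ A.filter (fun a => xq v ≤ h a ∧ lov v ≤ y a ∧ y a ≤ hiv v), w a) :
    ∃ B ⊆ A, (∀ v ∈ U, ∃ a ∈ B, xq v ≤ h a ∧ lov v ≤ y a ∧ y a ≤ hiv v) ∧
      (B.card : ℝ) ≤ 2 * ∑ a ∈ A, w a := by
  obtain ⟨B, hBA, hBcov, hBc⟩ := ssr_aux h y xq lov hiv U.card U le_rfl A w hw hfeas
  refine ⟨B, hBA, hBcov, ?_⟩
  have h0 : 0 ≤ ∑ a ∈ A, w a := Finset.sum_nonneg hw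
  rcases hBc with ⟨_, hBe⟩ | hle
  · rw [hBe]; simp; linarith
  · linarith

lemma exists_pi : ∀ (n : ℕ) (S : Finset HSeg), S.card = n → (∀ s ∈ S, s.lo ≤ s.hi) →
    (∀ s ∈ S, ∀ s' ∈ S, s ≠ s' → ¬ Set.Icc s'.lo s'.hi ⊆ Set.Icc s.lo s.hi) →
    ∃ π : HSeg → ℝ, (∀ s ∈ S, π s ∈ Set.Icc s.lo s.hi) ∧
      (∀ s ∈ S, ∀ s' ∈ S, π s' ∈ Set.Icc s.lo s.hi → π s' = π s) := by
  intro n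
  induction n with
  | zero =>
    intro S hcard _ _
    have : S = ∅ := Finset.card_eq_zero.1 hcard
    subst this
    exact ⟨fun s => s.hi, by simp, by simp⟩
  | succ n ih =>
    intro S hcard hS proper
    have hSne : S.Nonempty := Finset.card_pos.1 (by omega)
    obtain ⟨s1, hs1S, hs1max⟩ := S.exists_max_image HSeg.hi hSne
    set S' := S.erase s1 with hS'def
    have hS'sub : S' ⊆ S := Finset.erase_subset _ _
    have hS'card : S'.card = n := by
      rw [hS'def, Finset.card_erase_of_mem hs1S]; omega
    obtain ⟨π', hπ'1, hπ'2⟩ := ih S' hS'card (fun s hs => hS s (hS'sub hs))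
      (fun s hs s' hs' hne => proper s (hS'sub hs) s' (hS'sub hs') hne)
    have key : ∀ a ∈ S', ∀ b ∈ S', π' a ∈ Set.Icc s1.lo s1.hi → π' b ∈ Set.Icc s1.lo s1.hi →
        π' a = π' b := by
      have main : ∀ a ∈ S', ∀ b ∈ S', π' a ≤ π' b → π' a ∈ Set.Icc s1.lo s1.hi →
          π' b ∈ Set.Icc s1.lo s1.hi → π' a = π' b := by
        intro a ha b hb hle hai hbi
        by_contra hne
        have hbmem := hπ'1 b hb
        have hnab : π' a ∉ Set.Icc b.lo b.hi := by
          intro hc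
          exact hne (hπ'2 b hb a ha hc)
        have hblo : π' a < b.lo := by
          rcases lt_or_ge (π' a) b.lo with h | h
          · exact h
          · exact absurd ⟨h, le_trans hle hbmem.2⟩ hnab
        have hsub : Set.Icc b.lo b.hi ⊆ Set.Icc s1.lo s1.hi :=
          Set.Icc_subset_Icc (le_of_lt (lt_of_le_of_lt hai.1 hblo)) (hs1max b (hS'sub hb))
        have hbne : s1 ≠ b := fun he => (Finset.mem_erase.1 hb).1 he.symm
        exact proper s1 hs1S b (hS'sub hb) hbne hsub
      intro a ha b hb hai hbi
      rcases le_total (π' a) (π' b) with h | h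
      · exact main a ha b hb h hai hbi
      · exact (main b hb a ha h hbi hai).symm
    set π : HSeg → ℝ := fun s =>
      if s = s1 then
        (if h : ∃ a, a ∈ S' ∧ π' a ∈ Set.Icc s1.lo s1.hi then π' h.choose else s1.hi)
      else π' s with hπdef
    have hπold : ∀ s, s ≠ s1 → π s = π' s := by
      intro s hs
      rw [hπdef]
      simp only [if_neg hs]
    refine ⟨π, ?_, ?_⟩
    · intro s hs
      by_cases hss : s = s1
      · subst hss
        by_cases hex : ∃ a, a ∈ S' ∧ π' a ∈ Set.Icc s.lo s.hi
        · have hval : π s = π' hex.choose := by simp only [hπdef, if_true, dif_pos hex]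
          rw [hval]
          exact hex.choose_spec.2
        · have hval : π s = s.hi := by simp only [hπdef, if_true, dif_neg hex]
          rw [hval]
          exact ⟨hS s hs, le_refl _⟩
      · rw [hπold s hss]
        exact hπ'1 s (Finset.mem_erase.2 ⟨hss, hs⟩)
    · intro s hs s' hs' hmem
      by_cases hs'1 : s' = s1
      · subst hs'1
        by_cases hss : s = s'
        · rw [hss]
        · have hsS' : s ∈ S' := Finset.mem_erase.2 ⟨hss, hs⟩
          by_cases hex : ∃ a, a ∈ S' ∧ π' a ∈ Set.Icc s'.lo s'.hi
          · have hval : π s' = π' hex.choose := by simp only [hπdef, if_true, dif_pos hex]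
            rw [hval] at hmem ⊢
            rw [hπold s hss]
            exact hπ'2 s hsS' hex.choose hex.choose_spec.1 hmem
          · have hval : π s' = s'.hi := by simp only [hπdef, if_true, dif_neg hex]
            rw [hval] at hmem
            exfalso
            apply hex
            refine ⟨s, hsS', ?_, le_trans (hπ'1 s hsS').2 (hs1max s hs)⟩
            by_contra hlt
            push_neg at hlt
            have hsub : Set.Icc s'.lo s'.hi ⊆ Set.Icc s.lo s.hi :=
              Set.Icc_subset_Icc (le_of_lt (lt_of_le_of_lt (hπ'1 s hsS').1 hlt)) hmem.2
            exact proper s hs s' hs1S hss hsub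
      · have hs'S' : s' ∈ S' := Finset.mem_erase.2 ⟨hs'1, hs'⟩
        rw [hπold s' hs'1] at hmem ⊢
        by_cases hss : s = s1
        · subst hss
          by_cases hex : ∃ a, a ∈ S' ∧ π' a ∈ Set.Icc s.lo s.hi
          · have hval : π s = π' hex.choose := by simp only [hπdef, if_true, dif_pos hex]
            rw [hval]
            exact key s' hs'S' hex.choose hex.choose_spec.1 hmem hex.choose_spec.2
          · exact absurd ⟨s', hs'S', hmem⟩ hex
        · rw [hπold s hss]
          exact hπ'2 s (Finset.mem_erase.2 ⟨hss, hs⟩) s' hs'S' hmem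

lemma round_lemma (S : Finset HSeg) (T : Finset VSeg)
    (hS : ∀ s ∈ S, s.lo ≤ s.hi)
    (proper : ∀ s ∈ S, ∀ s' ∈ S, s ≠ s' →
      ¬ Set.Icc s'.lo s'.hi ⊆ Set.Icc s.lo s.hi)
    (x : HSeg → ℝ) (hx0 : ∀ s, 0 ≤ x s)
    (hxf : ∀ v ∈ T, 1 ≤ ∑ s ∈ S.filter (fun s => hitsHV s v), x s) :
    ∃ D : Finset HSeg, D ⊆ S ∧ (∀ v ∈ T, ∃ s ∈ D, hitsHV s v) ∧
      (D.card : ℝ) ≤ 8 * ∑ s ∈ S, x s := by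
  obtain ⟨π, hπ1, hπ2⟩ := exists_pi S.card S rfl hS proper
  set Lm : VSeg → ℝ := fun v => ∑ s ∈ S.filter (fun s => hitsHV s v ∧ π s ≤ v.x), x s with hLmdef
  set Rm : VSeg → ℝ := fun v => ∑ s ∈ S.filter (fun s => hitsHV s v ∧ ¬ π s ≤ v.x), x s with hRmdef
  -- all left-hitting segments share their π-value
  have shareL : ∀ v : VSeg, ∀ s ∈ S, ∀ s' ∈ S, hitsHV s v → hitsHV s' v →
      π s ≤ v.x → π s' ≤ v.x → π s' = π s := by
    have main : ∀ v : VSeg, ∀ s ∈ S, ∀ s' ∈ S, hitsHV s v → hitsHV s' v →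
        π s ≤ v.x → π s' ≤ v.x → π s ≤ π s' → π s' = π s := by
      intro v s hs s' hs' hh hh' _ hle' hmono
      exact hπ2 s hs s' hs' ⟨le_trans (hπ1 s hs).1 hmono, le_trans hle' hh.2.1⟩
    intro v s hs s' hs' hh hh' hle hle'
    rcases le_total (π s) (π s') with hc | hc
    · exact main v s hs s' hs' hh hh' hle hle' hc
    · exact (main v s' hs' s hs hh' hh hle' hle hc).symm
  have shareR : ∀ v : VSeg, ∀ s ∈ S, ∀ s' ∈ S, hitsHV s v → hitsHV s' v →
      ¬ π s ≤ v.x → ¬ π s' ≤ v.x → π s' = π s := by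
    have main : ∀ v : VSeg, ∀ s ∈ S, ∀ s' ∈ S, hitsHV s v → hitsHV s' v →
        ¬ π s ≤ v.x → ¬ π s' ≤ v.x → π s' ≤ π s → π s' = π s := by
      intro v s hs s' hs' hh hh' _ hgt' hmono
      exact hπ2 s hs s' hs'
        ⟨le_trans hh.1 (le_of_lt (not_le.1 hgt')), le_trans hmono (hπ1 s hs).2⟩
    intro v s hs s' hs' hh hh' hgt hgt'
    rcases le_total (π s') (π s) with hc | hc
    · exact main v s hs s' hs' hh hh' hgt hgt' hc
    · exact (main v s' hs' s hs hh' hh hgt' hgt hc).symm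
  -- mass partition
  have hpartition : ∀ v ∈ T, 1 ≤ Lm v + Rm v := by
    intro v hv
    have h1 : (S.filter (fun s => hitsHV s v)).filter (fun s => π s ≤ v.x)
        = S.filter (fun s => hitsHV s v ∧ π s ≤ v.x) := Finset.filter_filter _ _ _
    have h2 : (S.filter (fun s => hitsHV s v)).filter (fun s => ¬ π s ≤ v.x)
        = S.filter (fun s => hitsHV s v ∧ ¬ π s ≤ v.x) := Finset.filter_filter _ _ _
    have h3 := Finset.sum_filter_add_sum_filter_not (S.filter (fun s => hitsHV s v))
      (fun s => π s ≤ v.x) x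
    rw [h1, h2] at h3
    rw [hLmdef, hRmdef]
    simp only
    rw [h3]
    exact hxf v hv
  -- the right-facing SSR instance at point p
  have hR : ∀ p : ℝ, ∃ B : Finset HSeg, B ⊆ S.filter (fun s => π s = p) ∧
      (∀ v ∈ T.filter (fun v => (∃ s ∈ S, (hitsHV s v ∧ π s ≤ v.x) ∧ π s = p) ∧ 1/2 ≤ Lm v),
        ∃ s ∈ B, hitsHV s v) ∧
      (B.card : ℝ) ≤ 4 * ∑ s ∈ S.filter (fun s => π s = p), x s := by
    intro p
    set A := S.filter (fun s => π s = p) with hAdef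
    set U := T.filter (fun v => (∃ s ∈ S, (hitsHV s v ∧ π s ≤ v.x) ∧ π s = p) ∧ 1/2 ≤ Lm v)
      with hUdef
    have hfilt : ∀ v ∈ U, A.filter (fun s => v.x ≤ s.hi ∧ v.lo ≤ s.y ∧ s.y ≤ v.hi)
        = S.filter (fun s => hitsHV s v ∧ π s ≤ v.x) := by
      intro v hv
      obtain ⟨hvT, ⟨s0, hs0S, ⟨hhit0, hle0⟩, hp0⟩, _⟩ := Finset.mem_filter.1 hv
      ext a
      simp only [hAdef, Finset.mem_filter, and_assoc]
      constructor
      · rintro ⟨haS, hap, hc1, hc2, hc3⟩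
        have halo : a.lo ≤ v.x := le_trans (hπ1 a haS).1 (by rw [hap, ← hp0]; exact hle0)
        exact ⟨haS, ⟨halo, hc1, hc2, hc3⟩, by rw [hap, ← hp0]; exact hle0⟩
      · rintro ⟨haS, hhit, hle⟩
        have : π a = p := by rw [← hp0]; exact shareL v s0 hs0S a haS hhit0 hhit hle0 hle
        exact ⟨haS, this, hhit.2.1, hhit.2.2.1, hhit.2.2.2⟩
    have hfeasA : ∀ v ∈ U, 1 ≤ ∑ s ∈ A.filter
        (fun s => v.x ≤ s.hi ∧ v.lo ≤ s.y ∧ s.y ≤ v.hi), 2 * x s := by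
      intro v hv
      rw [hfilt v hv]
      obtain ⟨_, _, hhalf⟩ := Finset.mem_filter.1 hv
      have : ∑ s ∈ S.filter (fun s => hitsHV s v ∧ π s ≤ v.x), 2 * x s
          = 2 * Lm v := by rw [hLmdef]; simp only; rw [Finset.mul_sum]
      rw [this]
      linarith
    obtain ⟨B, hBA, hBcov, hBc⟩ := ssr HSeg.hi HSeg.y VSeg.x VSeg.lo VSeg.hi U A
      (fun s => 2 * x s) (fun a _ => by show (0:ℝ) ≤ 2 * x a; linarith [hx0 a]) hfeasA
    refine ⟨B, hBA, ?_, ?_⟩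
    · intro v hv
      obtain ⟨hvT, ⟨s0, hs0S, ⟨hhit0, hle0⟩, hp0⟩, _⟩ := Finset.mem_filter.1 hv
      obtain ⟨a, haB, hc1, hc2, hc3⟩ := hBcov v hv
      have haA := hBA haB
      obtain ⟨haS, hap⟩ := Finset.mem_filter.1 haA
      have halo : a.lo ≤ v.x := le_trans (hπ1 a haS).1 (by rw [hap, ← hp0]; exact hle0)
      exact ⟨a, haB, halo, hc1, hc2, hc3⟩
    · have : ∑ s ∈ A, 2 * x s = 2 * ∑ s ∈ A, x s := by rw [Finset.mul_sum]
      rw [this] at hBc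
      linarith
  -- the left-facing SSR instance at point p
  have hL : ∀ p : ℝ, ∃ B : Finset HSeg, B ⊆ S.filter (fun s => π s = p) ∧
      (∀ v ∈ T.filter (fun v => (∃ s ∈ S, (hitsHV s v ∧ ¬ π s ≤ v.x) ∧ π s = p) ∧ ¬ 1/2 ≤ Lm v),
        ∃ s ∈ B, hitsHV s v) ∧
      (B.card : ℝ) ≤ 4 * ∑ s ∈ S.filter (fun s => π s = p), x s := by
    intro p
    set A := S.filter (fun s => π s = p) with hAdef
    set U := T.filter (fun v => (∃ s ∈ S, (hitsHV s v ∧ ¬ π s ≤ v.x) ∧ π s = p) ∧ ¬ 1/2 ≤ Lm v)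
      with hUdef
    have hfilt : ∀ v ∈ U, A.filter (fun s => -v.x ≤ -s.lo ∧ v.lo ≤ s.y ∧ s.y ≤ v.hi)
        = S.filter (fun s => hitsHV s v ∧ ¬ π s ≤ v.x) := by
      intro v hv
      obtain ⟨hvT, ⟨s0, hs0S, ⟨hhit0, hgt0⟩, hp0⟩, _⟩ := Finset.mem_filter.1 hv
      ext a
      simp only [hAdef, Finset.mem_filter, and_assoc]
      constructor
      · rintro ⟨haS, hap, hc1, hc2, hc3⟩
        have hgt : ¬ π a ≤ v.x := by rw [hap, ← hp0]; exact hgt0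
        have hahi : v.x ≤ a.hi :=
          le_trans (le_of_lt (not_le.1 hgt)) (hπ1 a haS).2
        exact ⟨haS, ⟨by linarith, hahi, hc2, hc3⟩, hgt⟩
      · rintro ⟨haS, hhit, hgt⟩
        have : π a = p := by rw [← hp0]; exact shareR v s0 hs0S a haS hhit0 hhit hgt0 hgt
        exact ⟨haS, this, by linarith [hhit.1], hhit.2.2.1, hhit.2.2.2⟩
    have hfeasA : ∀ v ∈ U, 1 ≤ ∑ s ∈ A.filter
        (fun s => -v.x ≤ -s.lo ∧ v.lo ≤ s.y ∧ s.y ≤ v.hi), 2 * x s := by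
      intro v hv
      rw [hfilt v hv]
      obtain ⟨hvT, _, hnhalf⟩ := Finset.mem_filter.1 hv
      have hpar := hpartition v hvT
      have hlt : Lm v < 1/2 := not_le.1 hnhalf
      have : ∑ s ∈ S.filter (fun s => hitsHV s v ∧ ¬ π s ≤ v.x), 2 * x s
          = 2 * Rm v := by rw [hRmdef]; simp only; rw [Finset.mul_sum]
      rw [this]
      linarith
    obtain ⟨B, hBA, hBcov, hBc⟩ := ssr (fun s : HSeg => -s.lo) HSeg.y (fun v : VSeg => -v.x)
      VSeg.lo VSeg.hi U A (fun s => 2 * x s) (fun a _ => by show (0:ℝ) ≤ 2 * x a; linarith [hx0 a]) hfeasA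
    refine ⟨B, hBA, ?_, ?_⟩
    · intro v hv
      obtain ⟨hvT, ⟨s0, hs0S, ⟨hhit0, hgt0⟩, hp0⟩, _⟩ := Finset.mem_filter.1 hv
      obtain ⟨a, haB, hc1, hc2, hc3⟩ := hBcov v hv
      have haA := hBA haB
      obtain ⟨haS, hap⟩ := Finset.mem_filter.1 haA
      have hgt : ¬ π a ≤ v.x := by rw [hap, ← hp0]; exact hgt0
      have hahi : v.x ≤ a.hi := le_trans (le_of_lt (not_le.1 hgt)) (hπ1 a haS).2
      exact ⟨a, haB, by linarith, hahi, hc2, hc3⟩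
    · have : ∑ s ∈ A, 2 * x s = 2 * ∑ s ∈ A, x s := by rw [Finset.mul_sum]
      rw [this] at hBc
      linarith
  choose BR hBRsub hBRcov hBRcard using hR
  choose BL hBLsub hBLcov hBLcard using hL
  refine ⟨(S.image π).biUnion (fun p => BR p ∪ BL p), ?_, ?_, ?_⟩
  · apply Finset.biUnion_subset.2
    intro p _
    exact Finset.union_subset (le_trans (hBRsub p) (Finset.filter_subset _ _))
      (le_trans (hBLsub p) (Finset.filter_subset _ _))
  · intro v hvT
    have hpar := hpartition v hvT
    by_cases hhalf : 1/2 ≤ Lm v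
    · have hne : (S.filter (fun s => hitsHV s v ∧ π s ≤ v.x)).Nonempty := by
        rcases Finset.eq_empty_or_nonempty (S.filter (fun s => hitsHV s v ∧ π s ≤ v.x)) with he | h
        · exfalso
          have : Lm v = 0 := by rw [hLmdef]; simp only; rw [he]; simp
          linarith
        · exact h
      obtain ⟨s0, hs0⟩ := hne
      obtain ⟨hs0S, hhit0, hle0⟩ := Finset.mem_filter.1 hs0
      have hvU : v ∈ T.filter (fun v => (∃ s ∈ S, (hitsHV s v ∧ π s ≤ v.x) ∧ π s = π s0)
          ∧ 1/2 ≤ Lm v) :=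
        Finset.mem_filter.2 ⟨hvT, ⟨s0, hs0S, ⟨hhit0, hle0⟩, rfl⟩, hhalf⟩
      obtain ⟨a, haB, hahit⟩ := hBRcov (π s0) v hvU
      refine ⟨a, Finset.mem_biUnion.2 ⟨π s0, Finset.mem_image_of_mem π hs0S,
        Finset.mem_union_left _ haB⟩, hahit⟩
    · have hRhalf : 1/2 ≤ Rm v := by linarith [not_le.1 hhalf]
      have hne : (S.filter (fun s => hitsHV s v ∧ ¬ π s ≤ v.x)).Nonempty := by
        rcases Finset.eq_empty_or_nonempty (S.filter (fun s => hitsHV s v ∧ ¬ π s ≤ v.x)) with he | h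
        · exfalso
          have : Rm v = 0 := by rw [hRmdef]; simp only; rw [he]; simp
          linarith
        · exact h
      obtain ⟨s0, hs0⟩ := hne
      obtain ⟨hs0S, hhit0, hgt0⟩ := Finset.mem_filter.1 hs0
      have hvU : v ∈ T.filter (fun v => (∃ s ∈ S, (hitsHV s v ∧ ¬ π s ≤ v.x) ∧ π s = π s0)
          ∧ ¬ 1/2 ≤ Lm v) :=
        Finset.mem_filter.2 ⟨hvT, ⟨s0, hs0S, ⟨hhit0, hgt0⟩, rfl⟩, hhalf⟩
      obtain ⟨a, haB, hahit⟩ := hBLcov (π s0) v hvU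
      refine ⟨a, Finset.mem_biUnion.2 ⟨π s0, Finset.mem_image_of_mem π hs0S,
        Finset.mem_union_right _ haB⟩, hahit⟩
  · have h1 : (((S.image π).biUnion (fun p => BR p ∪ BL p)).card : ℝ)
        ≤ ∑ p ∈ S.image π, (((BR p).card : ℝ) + ((BL p).card : ℝ)) := by
      have ha : ((S.image π).biUnion (fun p => BR p ∪ BL p)).card
          ≤ ∑ p ∈ S.image π, (BR p ∪ BL p).card := Finset.card_biUnion_le
      have hb : ∑ p ∈ S.image π, (BR p ∪ BL p).card
          ≤ ∑ p ∈ S.image π, ((BR p).card + (BL p).card) :=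
        Finset.sum_le_sum (fun p _ => Finset.card_union_le _ _)
      calc (((S.image π).biUnion (fun p => BR p ∪ BL p)).card : ℝ)
          ≤ ((∑ p ∈ S.image π, ((BR p).card + (BL p).card) : ℕ) : ℝ) := by
            exact_mod_cast le_trans ha hb
        _ = ∑ p ∈ S.image π, (((BR p).card : ℝ) + ((BL p).card : ℝ)) := by push_cast; ring
    have h2 : ∑ p ∈ S.image π, (((BR p).card : ℝ) + ((BL p).card : ℝ))
        ≤ ∑ p ∈ S.image π, 8 * ∑ s ∈ S.filter (fun s => π s = p), x s :=
      Finset.sum_le_sum (fun p _ => by linarith [hBRcard p, hBLcard p])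
    have h3 : ∑ p ∈ S.image π, 8 * ∑ s ∈ S.filter (fun s => π s = p), x s
        = 8 * ∑ s ∈ S, x s := by
      rw [← Finset.mul_sum]
      congr 1
      exact Finset.sum_fiberwise_of_maps_to (fun s hs => Finset.mem_image_of_mem π hs) x
    linarith

/-- POSS: for a set `S` of horizontal segments whose `x`-axis
projections form a proper family of intervals and a set `T` of vertical segments,
the optimum of the ILP (choose a minimum subset of `S` intersecting all of `T`)
is at most `8` times the optimum of its LP relaxation. -/
theorem POSS_integrality_gap_le_8 (S : Finset HSeg) (T : Finset VSeg)
    (hS : ∀ s ∈ S, s.lo ≤ s.hi) (hT : ∀ v ∈ T, v.lo ≤ v.hi)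
    (proper : ∀ s ∈ S, ∀ s' ∈ S, s ≠ s' →
      ¬ Set.Icc s'.lo s'.hi ⊆ Set.Icc s.lo s.hi)
    (hfeas : ∀ v ∈ T, ∃ s ∈ S, hitsHV s v) :
    sInf {c : ℝ | ∃ D : Finset HSeg, D ⊆ S ∧ (∀ v ∈ T, ∃ s ∈ D, hitsHV s v) ∧
        c = D.card}
      ≤ 8 * sInf {c : ℝ | ∃ x : HSeg → ℝ, (∀ s, 0 ≤ x s ∧ x s ≤ 1) ∧
        (∀ v ∈ T, 1 ≤ ∑ s ∈ S.filter (fun s => hitsHV s v), x s) ∧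
        c = ∑ s ∈ S, x s} := by
  have hbdd : BddBelow {c : ℝ | ∃ D : Finset HSeg, D ⊆ S ∧ (∀ v ∈ T, ∃ s ∈ D, hitsHV s v) ∧
      c = D.card} := by
    refine ⟨0, ?_⟩
    rintro c ⟨D, _, _, rfl⟩
    positivity
  have hLPne : Set.Nonempty {c : ℝ | ∃ x : HSeg → ℝ, (∀ s, 0 ≤ x s ∧ x s ≤ 1) ∧
      (∀ v ∈ T, 1 ≤ ∑ s ∈ S.filter (fun s => hitsHV s v), x s) ∧ c = ∑ s ∈ S, x s} := by
    refine ⟨∑ s ∈ S, (1:ℝ), fun _ => 1, fun s => ⟨zero_le_one, le_refl 1⟩, ?_, rfl⟩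
    intro v hv
    obtain ⟨s, hsS, hhit⟩ := hfeas v hv
    have hone : 1 ≤ (S.filter (fun s => hitsHV s v)).card :=
      Finset.card_pos.2 ⟨s, Finset.mem_filter.2 ⟨hsS, hhit⟩⟩
    rw [Finset.sum_const, nsmul_eq_mul, mul_one]
    exact_mod_cast hone
  have key : ∀ c ∈ {c : ℝ | ∃ x : HSeg → ℝ, (∀ s, 0 ≤ x s ∧ x s ≤ 1) ∧
      (∀ v ∈ T, 1 ≤ ∑ s ∈ S.filter (fun s => hitsHV s v), x s) ∧ c = ∑ s ∈ S, x s},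
      sInf {c : ℝ | ∃ D : Finset HSeg, D ⊆ S ∧ (∀ v ∈ T, ∃ s ∈ D, hitsHV s v) ∧
        c = D.card} ≤ 8 * c := by
    rintro c ⟨x, hx01, hxf, rfl⟩
    obtain ⟨D, hDS, hDcov, hDcard⟩ := round_lemma S T hS proper x (fun s => (hx01 s).1) hxf
    have hmem : ((D.card : ℝ)) ∈ {c : ℝ | ∃ D : Finset HSeg, D ⊆ S ∧
        (∀ v ∈ T, ∃ s ∈ D, hitsHV s v) ∧ c = D.card} := ⟨D, hDS, hDcov, rfl⟩
    exact le_trans (csInf_le hbdd hmem) hDcard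
  have hfinal : sInf {c : ℝ | ∃ D : Finset HSeg, D ⊆ S ∧ (∀ v ∈ T, ∃ s ∈ D, hitsHV s v) ∧
      c = D.card} / 8 ≤ sInf {c : ℝ | ∃ x : HSeg → ℝ, (∀ s, 0 ≤ x s ∧ x s ≤ 1) ∧
      (∀ v ∈ T, 1 ≤ ∑ s ∈ S.filter (fun s => hitsHV s v), x s) ∧ c = ∑ s ∈ S, x s} :=
    le_csInf hLPne (fun c hc => by have := key c hc; linarith)
  linarith
end

section
/- Let H be a set of horizontal segments and V a set of vertical segments such that their axis projections form proper sets of intervals (PROPER-SEG-DOM instance). Let Z be the ILP of choosing a minimum subset of H ∪ V intersecting every segment of H ∪ V. If the 'same-orientation' sub-ILP Z' has integral LP (OPT(Z') = OPT(Z'_l)) and the 'cross-orientation' sub-ILP Z'' satisfies OPT(Z'') ≤ 8·OPT(Z''_l), then OPT(Z) ≤ 18·OPT(Z_l). -/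
attribute [local instance] Classical.propDecidable

/-- The point set of an axis-parallel segment (horizontal or vertical). -/
def segPts : HSeg ⊕ VSeg → Set (ℝ × ℝ)
  | .inl s => {p | p.2 = s.y ∧ s.lo ≤ p.1 ∧ p.1 ≤ s.hi}
  | .inr v => {p | p.1 = v.x ∧ v.lo ≤ p.2 ∧ p.2 ≤ v.hi}

/-- Two segments intersect. -/
def meets (a b : HSeg ⊕ VSeg) : Prop := (segPts a ∩ segPts b).Nonempty

/-- Two segments have the same orientation. -/
def sameOrient (a b : HSeg ⊕ VSeg) : Prop := a.isLeft = b.isLeft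

/-- `N_o u`: the segments of `G` of the same orientation as `u` intersecting `u`. -/
noncomputable def No (G : Finset (HSeg ⊕ VSeg)) (u : HSeg ⊕ VSeg) :
    Finset (HSeg ⊕ VSeg) :=
  G.filter (fun w => sameOrient u w ∧ meets u w)

/-- `N u \ N_o u`: the segments of `G` of the opposite orientation intersecting `u`. -/
noncomputable def Ncross (G : Finset (HSeg ⊕ VSeg)) (u : HSeg ⊕ VSeg) :
    Finset (HSeg ⊕ VSeg) :=
  G.filter (fun w => ¬ sameOrient u w ∧ meets u w)

open Finset in
/-- The set-cover sub-ILP has a minimizer. -/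
lemma cover_min (G : Finset (HSeg ⊕ VSeg)) (N : (HSeg ⊕ VSeg) → Finset (HSeg ⊕ VSeg))
    (hN : ∀ u, N u ⊆ G) (xs : HSeg ⊕ VSeg → ℝ) :
    ∃ D : Finset (HSeg ⊕ VSeg),
      D ⊆ G.filter (fun w => ∃ u ∈ G, (1/2 : ℝ) ≤ ∑ w' ∈ N u, xs w' ∧ w ∈ N u) ∧
      (∀ u ∈ G, (1/2 : ℝ) ≤ ∑ w' ∈ N u, xs w' → ∃ w ∈ D, w ∈ N u) ∧
      sInf {c : ℝ | ∃ D : Finset (HSeg ⊕ VSeg),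
        D ⊆ G.filter (fun w => ∃ u ∈ G, (1/2 : ℝ) ≤ ∑ w' ∈ N u, xs w' ∧ w ∈ N u) ∧
        (∀ u ∈ G, (1/2 : ℝ) ≤ ∑ w' ∈ N u, xs w' → ∃ w ∈ D, w ∈ N u) ∧
        c = D.card} = D.card := by
  classical
  set F := G.filter (fun w => ∃ u ∈ G, (1/2 : ℝ) ≤ ∑ w' ∈ N u, xs w' ∧ w ∈ N u) with hF
  set S := {c : ℝ | ∃ D : Finset (HSeg ⊕ VSeg), D ⊆ F ∧
      (∀ u ∈ G, (1/2 : ℝ) ≤ ∑ w' ∈ N u, xs w' → ∃ w ∈ D, w ∈ N u) ∧ c = D.card} with hS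
  have hmemF : ∀ u ∈ G, (1/2:ℝ) ≤ ∑ w' ∈ N u, xs w' → ∃ w ∈ F, w ∈ N u := by
    intro u hu hhalf
    have hne : (N u).Nonempty := by
      by_contra h
      rw [Finset.not_nonempty_iff_eq_empty] at h
      rw [h, Finset.sum_empty] at hhalf
      norm_num at hhalf
    obtain ⟨w, hw⟩ := hne
    exact ⟨w, Finset.mem_filter.mpr ⟨hN u hw, u, hu, hhalf, hw⟩, hw⟩
  have hSne : S.Nonempty :=
    ⟨(F.card : ℝ), F, le_refl _, fun u hu h => hmemF u hu h, rfl⟩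
  have hSfin : S.Finite := by
    apply Set.Finite.subset ((G.powerset.finite_toSet).image fun D => ((D.card : ℕ) : ℝ))
    rintro c ⟨D, hD, -, rfl⟩
    exact ⟨D, by simpa using hD.trans (Finset.filter_subset _ _), rfl⟩
  obtain ⟨D, h1, h2, h3⟩ := hSne.csInf_mem hSfin
  exact ⟨D, h1, h2, h3⟩

open Finset in
/-- The LP relaxation of a sub-ILP has optimum at most `2 OPT(Z_l)`. -/
lemma lp_le (G : Finset (HSeg ⊕ VSeg)) (N : (HSeg ⊕ VSeg) → Finset (HSeg ⊕ VSeg))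
    (hN : ∀ u, N u ⊆ G) (xs : HSeg ⊕ VSeg → ℝ) (hb : ∀ w, 0 ≤ xs w ∧ xs w ≤ 1) :
    sInf {c : ℝ | ∃ x : HSeg ⊕ VSeg → ℝ, (∀ w, 0 ≤ x w ∧ x w ≤ 1) ∧
        (∀ w, w ∉ G.filter (fun w => ∃ u ∈ G, (1/2 : ℝ) ≤ ∑ w' ∈ N u, xs w' ∧ w ∈ N u) → x w = 0) ∧
        (∀ u ∈ G, (1/2 : ℝ) ≤ ∑ w' ∈ N u, xs w' → 1 ≤ ∑ w ∈ N u, x w) ∧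
        c = ∑ w ∈ G, x w} ≤ 2 * ∑ w ∈ G, xs w := by
  classical
  set F := G.filter (fun w => ∃ u ∈ G, (1/2 : ℝ) ≤ ∑ w' ∈ N u, xs w' ∧ w ∈ N u) with hF
  set x : HSeg ⊕ VSeg → ℝ := fun w => if w ∈ F then min (2 * xs w) 1 else 0 with hx
  have hx0 : ∀ w, 0 ≤ x w ∧ x w ≤ 1 := by
    intro w
    simp only [hx]
    split
    · exact ⟨le_min (by linarith [(hb w).1]) zero_le_one, min_le_right _ _⟩
    · exact ⟨le_refl 0, zero_le_one⟩
  have hfe : ∀ u ∈ G, (1/2:ℝ) ≤ ∑ w' ∈ N u, xs w' → 1 ≤ ∑ w ∈ N u, x w := by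
    intro u hu hhalf
    have hxw : ∀ w ∈ N u, x w = min (2 * xs w) 1 := by
      intro w hw
      have hwF : w ∈ F := Finset.mem_filter.mpr ⟨hN u hw, u, hu, hhalf, hw⟩
      simp [hx, hwF]
    by_cases hc : ∃ w ∈ N u, (1:ℝ) ≤ 2 * xs w
    · obtain ⟨w, hw, hw1⟩ := hc
      have h1 : x w = 1 := by rw [hxw w hw]; exact min_eq_right hw1
      calc (1:ℝ) = x w := h1.symm
        _ ≤ ∑ w ∈ N u, x w := Finset.single_le_sum (fun i _ => (hx0 i).1) hw
    · push_neg at hc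
      have heq : ∀ w ∈ N u, x w = 2 * xs w := by
        intro w hw; rw [hxw w hw]; exact min_eq_left (hc w hw).le
      rw [Finset.sum_congr rfl heq, ← Finset.mul_sum]
      linarith
  have hmem : (∑ w ∈ G, x w) ∈ {c : ℝ | ∃ x : HSeg ⊕ VSeg → ℝ, (∀ w, 0 ≤ x w ∧ x w ≤ 1) ∧
        (∀ w, w ∉ F → x w = 0) ∧
        (∀ u ∈ G, (1/2 : ℝ) ≤ ∑ w' ∈ N u, xs w' → 1 ≤ ∑ w ∈ N u, x w) ∧
        c = ∑ w ∈ G, x w} :=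
    ⟨x, hx0, fun w hw => by simp [hx, hw], hfe, rfl⟩
  have hbdd : BddBelow {c : ℝ | ∃ x : HSeg ⊕ VSeg → ℝ, (∀ w, 0 ≤ x w ∧ x w ≤ 1) ∧
        (∀ w, w ∉ F → x w = 0) ∧
        (∀ u ∈ G, (1/2 : ℝ) ≤ ∑ w' ∈ N u, xs w' → 1 ≤ ∑ w ∈ N u, x w) ∧
        c = ∑ w ∈ G, x w} := by
    refine ⟨0, ?_⟩
    rintro c ⟨y, hy, -, -, rfl⟩
    exact Finset.sum_nonneg fun w _ => (hy w).1
  calc sInf _ ≤ ∑ w ∈ G, x w := csInf_le hbdd hmem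
    _ ≤ ∑ w ∈ G, 2 * xs w := by
        refine Finset.sum_le_sum fun w _ => ?_
        simp only [hx]
        split
        · exact min_le_left _ _
        · linarith [(hb w).1]
    _ = 2 * ∑ w ∈ G, xs w := (Finset.mul_sum _ _ _).symm

open Finset in
/-- PROPER-SEG-DOM: let `G = H ∪ V` be horizontal and vertical
segments whose axis projections are proper interval families, `Z` the ILP of
dominating every segment of `G` by a minimum subset of `G`, `x*` an optimal solution
of its relaxation `Z_l`, and `Z'`, `Z''` the same-orientation and cross-orientation
sub-ILPs obtained by half-rounding.  If `OPT(Z') = OPT(Z'_l)` and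
`OPT(Z'') ≤ 8·OPT(Z''_l)`, then `OPT(Z) ≤ 18·OPT(Z_l)`. -/
theorem properSegDom_18_of_subproblems (G : Finset (HSeg ⊕ VSeg))
    (hok : ∀ a ∈ G, (segPts a).Nonempty)
    (properH : ∀ s ∈ G, ∀ s' ∈ G, s.isLeft → s'.isLeft → s ≠ s' →
      ∀ a b : HSeg, s = .inl a → s' = .inl b → ¬ Set.Icc b.lo b.hi ⊆ Set.Icc a.lo a.hi)
    (properV : ∀ s ∈ G, ∀ s' ∈ G, s.isRight → s'.isRight → s ≠ s' →
      ∀ a b : VSeg, s = .inr a → s' = .inr b → ¬ Set.Icc b.lo b.hi ⊆ Set.Icc a.lo a.hi)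
    (xs : HSeg ⊕ VSeg → ℝ)
    (hbound : ∀ w, 0 ≤ xs w ∧ xs w ≤ 1)
    (hfeas : ∀ u ∈ G, 1 ≤ ∑ w ∈ No G u, xs w + ∑ w ∈ Ncross G u, xs w)
    (hopt : ∀ x' : HSeg ⊕ VSeg → ℝ, (∀ w, 0 ≤ x' w ∧ x' w ≤ 1) →
      (∀ u ∈ G, 1 ≤ ∑ w ∈ No G u, x' w + ∑ w ∈ Ncross G u, x' w) →
      ∑ w ∈ G, xs w ≤ ∑ w ∈ G, x' w)
    -- OPT(Z') = OPT(Z'_l)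
    (hZ' : sInf {c : ℝ | ∃ D : Finset (HSeg ⊕ VSeg),
        D ⊆ G.filter (fun w => ∃ u ∈ G, (1/2 : ℝ) ≤ ∑ w' ∈ No G u, xs w' ∧ w ∈ No G u) ∧
        (∀ u ∈ G, (1/2 : ℝ) ≤ ∑ w' ∈ No G u, xs w' → ∃ w ∈ D, w ∈ No G u) ∧
        c = D.card}
      = sInf {c : ℝ | ∃ x : HSeg ⊕ VSeg → ℝ, (∀ w, 0 ≤ x w ∧ x w ≤ 1) ∧
        (∀ w, w ∉ G.filter (fun w => ∃ u ∈ G, (1/2 : ℝ) ≤ ∑ w' ∈ No G u, xs w' ∧ w ∈ No G u) → x w = 0) ∧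
        (∀ u ∈ G, (1/2 : ℝ) ≤ ∑ w' ∈ No G u, xs w' → 1 ≤ ∑ w ∈ No G u, x w) ∧
        c = ∑ w ∈ G, x w})
    -- OPT(Z'') ≤ 8 · OPT(Z''_l)
    (hZ'' : sInf {c : ℝ | ∃ D : Finset (HSeg ⊕ VSeg),
        D ⊆ G.filter (fun w => ∃ u ∈ G, (1/2 : ℝ) ≤ ∑ w' ∈ Ncross G u, xs w' ∧ w ∈ Ncross G u) ∧
        (∀ u ∈ G, (1/2 : ℝ) ≤ ∑ w' ∈ Ncross G u, xs w' → ∃ w ∈ D, w ∈ Ncross G u) ∧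
        c = D.card}
      ≤ 8 * sInf {c : ℝ | ∃ x : HSeg ⊕ VSeg → ℝ, (∀ w, 0 ≤ x w ∧ x w ≤ 1) ∧
        (∀ w, w ∉ G.filter (fun w => ∃ u ∈ G, (1/2 : ℝ) ≤ ∑ w' ∈ Ncross G u, xs w' ∧ w ∈ Ncross G u) → x w = 0) ∧
        (∀ u ∈ G, (1/2 : ℝ) ≤ ∑ w' ∈ Ncross G u, xs w' → 1 ≤ ∑ w ∈ Ncross G u, x w) ∧
        c = ∑ w ∈ G, x w}) :
    -- OPT(Z) ≤ 18 · OPT(Z_l)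
    sInf {c : ℝ | ∃ D : Finset (HSeg ⊕ VSeg), D ⊆ G ∧
        (∀ u ∈ G, ∃ w ∈ D, meets u w) ∧ c = D.card}
      ≤ 18 * ∑ w ∈ G, xs w := by
  classical
  obtain ⟨D1, hD1F, hD1c, hS1⟩ := cover_min G (No G) (fun u => Finset.filter_subset _ _) xs
  obtain ⟨D2, hD2F, hD2c, hS2⟩ := cover_min G (Ncross G) (fun u => Finset.filter_subset _ _) xs
  have hL1 := lp_le G (No G) (fun u => Finset.filter_subset _ _) xs hbound
  have hL2 := lp_le G (Ncross G) (fun u => Finset.filter_subset _ _) xs hbound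
  have hA : (D1.card : ℝ) ≤ 2 * ∑ w ∈ G, xs w := by
    rw [← hS1]; rw [hZ']; exact hL1
  have hB : (D2.card : ℝ) ≤ 16 * ∑ w ∈ G, xs w := by
    rw [← hS2]
    calc _ ≤ 8 * sInf {c : ℝ | ∃ x : HSeg ⊕ VSeg → ℝ, (∀ w, 0 ≤ x w ∧ x w ≤ 1) ∧
        (∀ w, w ∉ G.filter (fun w => ∃ u ∈ G, (1/2 : ℝ) ≤ ∑ w' ∈ Ncross G u, xs w' ∧ w ∈ Ncross G u) → x w = 0) ∧
        (∀ u ∈ G, (1/2 : ℝ) ≤ ∑ w' ∈ Ncross G u, xs w' → 1 ≤ ∑ w ∈ Ncross G u, x w) ∧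
        c = ∑ w ∈ G, x w} := hZ''
      _ ≤ 8 * (2 * ∑ w ∈ G, xs w) := by linarith
      _ = 16 * ∑ w ∈ G, xs w := by ring
  have hDsub : D1 ∪ D2 ⊆ G := Finset.union_subset
    (hD1F.trans (Finset.filter_subset _ _)) (hD2F.trans (Finset.filter_subset _ _))
  have hDcov : ∀ u ∈ G, ∃ w ∈ D1 ∪ D2, meets u w := by
    intro u hu
    have h := hfeas u hu
    by_cases h1 : (1/2:ℝ) ≤ ∑ w' ∈ No G u, xs w'
    · obtain ⟨w, hw, hwN⟩ := hD1c u hu h1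
      exact ⟨w, Finset.mem_union_left _ hw, (Finset.mem_filter.mp hwN).2.2⟩
    · have h2 : (1/2:ℝ) ≤ ∑ w' ∈ Ncross G u, xs w' := by
        push_neg at h1; linarith
      obtain ⟨w, hw, hwN⟩ := hD2c u hu h2
      exact ⟨w, Finset.mem_union_right _ hw, (Finset.mem_filter.mp hwN).2.2⟩
  have hmemZ : (((D1 ∪ D2).card : ℕ) : ℝ) ∈ {c : ℝ | ∃ D : Finset (HSeg ⊕ VSeg), D ⊆ G ∧
      (∀ u ∈ G, ∃ w ∈ D, meets u w) ∧ c = D.card} := ⟨D1 ∪ D2, hDsub, hDcov, rfl⟩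
  have hbdd : BddBelow {c : ℝ | ∃ D : Finset (HSeg ⊕ VSeg), D ⊆ G ∧
      (∀ u ∈ G, ∃ w ∈ D, meets u w) ∧ c = D.card} := by
    refine ⟨0, ?_⟩
    rintro c ⟨D, -, -, rfl⟩
    positivity
  calc sInf _ ≤ (((D1 ∪ D2).card : ℕ) : ℝ) := csInf_le hbdd hmemZ
    _ ≤ (D1.card : ℝ) + (D2.card : ℝ) := by exact_mod_cast Finset.card_union_le _ _
    _ ≤ 18 * ∑ w ∈ G, xs w := by linarith
end
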